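/- Let d ≥ 1, let ρ be a density matrix on ℂ^d ⊗ ℂ^d, and let (A_i, B_i)_{i∈I} be a finite family of pairs of d×d complex matrices with Σ_i (A_i ⊗ B_i)† (A_i ⊗ B_i) = 1. For each i set p_i = Tr((A_i ⊗ B_i) ρ (A_i ⊗ B_i)†) (a nonnegative real) and, when p_i > 0, set σ_i = (1/p_i) (A_i ⊗ B_i) ρ (A_i ⊗ B_i)†. Then Σ_{i : p_i > 0} p_i · G(σ_i) ≤ (Σ_i |det A_i|^{1/d} |det B_i|^{1/d}) · G(ρ). -/

import Mathlib

open Matrix Kronecker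
open scoped Classical ComplexOrder

noncomputable section

abbrev Idx (d : ℕ) := Fin d × Fin d

/-- Partial trace over the second factor. -/
def trB {d : ℕ} (M : Matrix (Idx d) (Idx d) ℂ) : Matrix (Fin d) (Fin d) ℂ :=
  fun i j => ∑ k, M (i, k) (j, k)

/-- Rank-one projector-like matrix `ψψ†` on the bipartite space. -/
def outer {d : ℕ} (ψ : Idx d → ℂ) : Matrix (Idx d) (Idx d) ℂ :=
  Matrix.vecMulVec ψ (fun x => (starRingEnd ℂ) (ψ x))

/-- Pure-state G-concurrence `g(ψ) = d (det Tr_B ψψ†)^{1/d}`. -/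
def gPure (d : ℕ) (ψ : Idx d → ℂ) : ℝ :=
  (d : ℝ) * ((trB (outer ψ)).det.re) ^ ((1 : ℝ) / d)

/-- Mixed-state G-concurrence via the convex roof. -/
def Gconc (d : ℕ) (ρ : Matrix (Idx d) (Idx d) ℂ) : ℝ :=
  sInf { r : ℝ | ∃ (m : ℕ) (q : Fin m → ℝ) (ψ : Fin m → (Idx d → ℂ)),
    (∀ j, 0 ≤ q j) ∧ (∀ j, ∑ x, Complex.normSq (ψ j x) = 1) ∧
    ρ = ∑ j, (q j : ℂ) • outer (ψ j) ∧
    r = ∑ j, q j * gPure d (ψ j) }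

/-- The swap unitary `V(x ⊗ y) = y ⊗ x`. -/
def swapV (d : ℕ) : Matrix (Idx d) (Idx d) ℂ :=
  fun x y => if x.1 = y.2 ∧ x.2 = y.1 then 1 else 0

namespace GAux
variable {d : ℕ}

/-- matrix form of a bipartite vector -/
def toMat (ψ : Idx d → ℂ) : Matrix (Fin d) (Fin d) ℂ := fun i k => ψ (i, k)

lemma trB_outer (ψ : Idx d → ℂ) : trB (outer ψ) = toMat ψ * (toMat ψ)ᴴ := by
  ext i j
  simp [trB, outer, toMat, Matrix.mul_apply, Matrix.vecMulVec_apply, Matrix.conjTranspose_apply]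

lemma det_self_mul_conjTranspose {n : Type*} [Fintype n] [DecidableEq n]
    (M : Matrix n n ℂ) : (M * Mᴴ).det = (Complex.normSq M.det : ℂ) := by
  rw [Matrix.det_mul, Matrix.det_conjTranspose,
    show (star M.det) = (starRingEnd ℂ) M.det from rfl, Complex.mul_conj]

lemma gPure_eq (ψ : Idx d → ℂ) :
    gPure d ψ = (d : ℝ) * (Complex.normSq (toMat ψ).det) ^ ((1:ℝ)/d) := by
  rw [gPure, trB_outer, det_self_mul_conjTranspose, Complex.ofReal_re]

lemma gPure_nonneg (ψ : Idx d → ℂ) : 0 ≤ gPure d ψ := by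
  rw [gPure_eq]
  exact mul_nonneg (Nat.cast_nonneg d) (Real.rpow_nonneg (Complex.normSq_nonneg _) _)

lemma outer_eq (ψ : Idx d → ℂ) :
    outer ψ = Matrix.replicateCol Unit ψ * (Matrix.replicateCol Unit ψ)ᴴ := by
  rw [Matrix.conjTranspose_replicateCol, ← Matrix.vecMulVec_eq]
  rfl

lemma outer_mulVec (M : Matrix (Idx d) (Idx d) ℂ) (ψ : Idx d → ℂ) :
    outer (M *ᵥ ψ) = M * outer ψ * Mᴴ := by
  rw [outer_eq, outer_eq, Matrix.replicateCol_mulVec, Matrix.conjTranspose_mul]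
  simp only [Matrix.mul_assoc]

lemma toMat_kron_mulVec (A B : Matrix (Fin d) (Fin d) ℂ) (ψ : Idx d → ℂ) :
    toMat ((A ⊗ₖ B) *ᵥ ψ) = A * toMat ψ * Bᵀ := by
  ext i k
  simp only [toMat, Matrix.mulVec, dotProduct, Matrix.mul_apply,
    Matrix.kroneckerMap_apply, Matrix.transpose_apply]
  rw [← Finset.univ_product_univ, Finset.sum_product]
  rw [Finset.sum_comm]
  apply Finset.sum_congr rfl; intro l _
  rw [Finset.sum_mul]
  apply Finset.sum_congr rfl; intro j _
  ring


lemma toMat_smul (c : ℂ) (ψ : Idx d → ℂ) : toMat (c • ψ) = c • toMat ψ := rfl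

lemma pow_mul_rpow_inv {a x : ℝ} (ha : 0 ≤ a) (hx : 0 ≤ x) (hd : d ≠ 0) :
    (a ^ d * x) ^ ((1:ℝ)/d) = a * x ^ ((1:ℝ)/d) := by
  rw [Real.mul_rpow (pow_nonneg ha d) hx, ← Real.rpow_natCast a d, ← Real.rpow_mul ha]
  congr 1
  rw [mul_one_div, div_self (by exact_mod_cast hd), Real.rpow_one]

lemma gPure_smul (hd : d ≠ 0) (c : ℂ) (ψ : Idx d → ℂ) :
    gPure d (c • ψ) = Complex.normSq c * gPure d ψ := by
  rw [gPure_eq, gPure_eq, toMat_smul, Matrix.det_smul, Fintype.card_fin, Complex.normSq_mul, map_pow Complex.normSq,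
    pow_mul_rpow_inv (Complex.normSq_nonneg c) (Complex.normSq_nonneg _) hd]
  ring

lemma gPure_kron_mulVec (hd : d ≠ 0) (A B : Matrix (Fin d) (Fin d) ℂ) (ψ : Idx d → ℂ) :
    gPure d ((A ⊗ₖ B) *ᵥ ψ)
      = (Complex.normSq A.det * Complex.normSq B.det) ^ ((1:ℝ)/d) * gPure d ψ := by
  rw [gPure_eq, gPure_eq, toMat_kron_mulVec, Matrix.det_mul, Matrix.det_mul,
    Matrix.det_transpose, Complex.normSq_mul, Complex.normSq_mul]
  rw [show Complex.normSq A.det * Complex.normSq (toMat ψ).det * Complex.normSq B.det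
    = (Complex.normSq A.det * Complex.normSq B.det) * Complex.normSq (toMat ψ).det by ring]
  rw [Real.mul_rpow (mul_nonneg (Complex.normSq_nonneg _) (Complex.normSq_nonneg _))
    (Complex.normSq_nonneg _)]
  ring

lemma outer_smul (c : ℂ) (ψ : Idx d → ℂ) :
    outer (c • ψ) = (Complex.normSq c : ℂ) • outer ψ := by
  ext x y
  simp only [outer, Matrix.vecMulVec_apply, Pi.smul_apply, smul_eq_mul, _root_.map_mul,
    Matrix.smul_apply, ← Complex.mul_conj]
  ring

lemma trace_outer (ψ : Idx d → ℂ) :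
    (outer ψ).trace = ((∑ x, Complex.normSq (ψ x) : ℝ) : ℂ) := by
  rw [Matrix.trace]
  push_cast
  apply Finset.sum_congr rfl
  intro x _
  simp [outer, Matrix.diag, Matrix.vecMulVec_apply, Complex.mul_conj]


def S (d : ℕ) (ρ : Matrix (Idx d) (Idx d) ℂ) : Set ℝ :=
  { r : ℝ | ∃ (m : ℕ) (q : Fin m → ℝ) (ψ : Fin m → (Idx d → ℂ)),
    (∀ j, 0 ≤ q j) ∧ (∀ j, ∑ x, Complex.normSq (ψ j x) = 1) ∧
    ρ = ∑ j, (q j : ℂ) • outer (ψ j) ∧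
    r = ∑ j, q j * gPure d (ψ j) }

lemma Gconc_eq (d : ℕ) (ρ : Matrix (Idx d) (Idx d) ℂ) : Gconc d ρ = sInf (S d ρ) := rfl

lemma S_nonneg {ρ : Matrix (Idx d) (Idx d) ℂ} {r : ℝ} (h : r ∈ S d ρ) : 0 ≤ r := by
  obtain ⟨m, q, ψ, hq, -, -, hr⟩ := h
  rw [hr]
  exact Finset.sum_nonneg fun j _ => mul_nonneg (hq j) (gPure_nonneg _)

lemma bddBelow_S (d : ℕ) (ρ : Matrix (Idx d) (Idx d) ℂ) : BddBelow (S d ρ) :=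
  ⟨0, fun r hr => S_nonneg hr⟩

lemma Gconc_le {ρ : Matrix (Idx d) (Idx d) ℂ} {r : ℝ} (h : r ∈ S d ρ) : Gconc d ρ ≤ r :=
  csInf_le (bddBelow_S d ρ) h

lemma unitary_diag_entry {n : Type*} [Fintype n] [DecidableEq n]
    (V : Matrix n n ℂ) (f : n → ℂ) (x y : n) :
    (V * Matrix.diagonal f * star V) x y = ∑ k, f k * (V x k * (starRingEnd ℂ) (V y k)) := by
  simp only [Matrix.mul_apply, Matrix.diagonal_apply, Matrix.star_apply, Complex.star_def,
    mul_ite, mul_zero, ite_mul, zero_mul, Finset.sum_ite_eq', Finset.mem_univ, if_true]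
  apply Finset.sum_congr rfl
  intro k _
  ring

lemma S_nonempty {ρ : Matrix (Idx d) (Idx d) ℂ} (h : ρ.PosSemidef) : (S d ρ).Nonempty := by
  classical
  set V : Matrix (Idx d) (Idx d) ℂ := (h.1.eigenvectorUnitary : Matrix (Idx d) (Idx d) ℂ)
  have hV : star V * V = 1 := Unitary.coe_star_mul_self h.1.eigenvectorUnitary
  set e : Idx d ≃ Fin (d * d) := finProdFinEquiv
  refine ⟨∑ j : Fin (d * d), h.1.eigenvalues (e.symm j) * gPure d (fun x => V x (e.symm j)),
    d * d, fun j => h.1.eigenvalues (e.symm j), fun j => fun x => V x (e.symm j),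
    fun j => h.eigenvalues_nonneg _, fun j => ?_, ?_, rfl⟩
  · -- unit columns
    have h1 : ((∑ x, Complex.normSq (V x (e.symm j)) : ℝ) : ℂ) = 1 := by
      have := congrFun (congrFun hV (e.symm j)) (e.symm j)
      rw [Matrix.mul_apply] at this
      rw [show ((1 : Matrix (Idx d) (Idx d) ℂ) (e.symm j) (e.symm j)) = 1 by simp] at this
      rw [← this]
      push_cast
      apply Finset.sum_congr rfl
      intro x _
      simp [Matrix.star_apply, Complex.star_def, Complex.normSq_eq_conj_mul_self]
    exact_mod_cast h1
  · -- decomposition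
    refine h.1.spectral_theorem.trans ?_
    ext x y
    rw [Unitary.conjStarAlgAut_apply, unitary_diag_entry]
    rw [Matrix.sum_apply]
    apply Fintype.sum_equiv e
    intro k
    simp only [outer, Matrix.smul_apply, Matrix.vecMulVec_apply, Function.comp,
      Equiv.symm_apply_apply, smul_eq_mul]
    rfl


lemma eigenvalue_le_one {n : Type*} [Fintype n] [DecidableEq n] {P : Matrix n n ℂ}
    (hP : P.PosSemidef) (h1 : (1 - P).PosSemidef) (i : n) : hP.1.eigenvalues i ≤ 1 := by
  have hnorm : ‖hP.1.eigenvectorBasis i‖ = 1 := hP.1.eigenvectorBasis.orthonormal.1 i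
  have hvv : dotProduct (star ⇑(hP.1.eigenvectorBasis i)) ⇑(hP.1.eigenvectorBasis i)
      = 1 := by
    have h2 : (inner ℂ (hP.1.eigenvectorBasis i) (hP.1.eigenvectorBasis i) : ℂ) = 1 := by
      rw [inner_self_eq_norm_sq_to_K, hnorm]
      norm_num
    rw [← h2, EuclideanSpace.inner_eq_star_dotProduct, dotProduct_comm]
  have h0 := h1.re_dotProduct_nonneg ⇑(hP.1.eigenvectorBasis i)
  rw [Matrix.sub_mulVec, Matrix.one_mulVec, dotProduct_sub, map_sub, hvv] at h0
  rw [hP.1.eigenvalues_eq]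
  have : RCLike.re (1 : ℂ) = 1 := by simp
  linarith

lemma det_re_le_one {n : Type*} [Fintype n] [DecidableEq n] {P : Matrix n n ℂ}
    (hP : P.PosSemidef) (h1 : (1 - P).PosSemidef) : P.det.re ≤ 1 := by
  rw [hP.1.det_eq_prod_eigenvalues, ← RCLike.ofReal_prod]
  have hb := Finset.prod_le_one (s := Finset.univ) (fun i _ => hP.eigenvalues_nonneg i)
    (fun i _ => eigenvalue_le_one hP h1 i)
  exact_mod_cast hb


set_option maxHeartbeats 1000000 in
lemma normSq_det_le_one {d : ℕ} (hd : 1 ≤ d) {m : ℕ} (A B : Fin m → Matrix (Fin d) (Fin d) ℂ)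
    (hTP : ∑ i, (A i ⊗ₖ B i)ᴴ * (A i ⊗ₖ B i) = 1) (i : Fin m) :
    Complex.normSq (A i).det * Complex.normSq (B i).det ≤ 1 := by
  set N := A i ⊗ₖ B i with hN
  have hP : (Nᴴ * N).PosSemidef := Matrix.posSemidef_conjTranspose_mul_self N
  have h1 : (1 - Nᴴ * N).PosSemidef := by
    have he : 1 - Nᴴ * N = ∑ j ∈ Finset.univ.erase i, (A j ⊗ₖ B j)ᴴ * (A j ⊗ₖ B j) := by
      rw [← hTP, ← Finset.add_sum_erase _ _ (Finset.mem_univ i), ← hN]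
      exact add_sub_cancel_left _ _
    rw [he]
    apply Finset.sum_induction (fun j => (A j ⊗ₖ B j)ᴴ * (A j ⊗ₖ B j))
      (fun M => M.PosSemidef) (fun a b ha hb => ha.add hb) Matrix.PosSemidef.zero
    intro j _
    exact Matrix.posSemidef_conjTranspose_mul_self _
  have hdet := det_re_le_one hP h1
  have hd1 : (Nᴴ * N).det = (Complex.normSq N.det : ℂ) := by
    rw [Matrix.det_mul, Matrix.det_conjTranspose, mul_comm,
      show star N.det = (starRingEnd ℂ) N.det from rfl, Complex.mul_conj]
  have hkron : N.det = (A i).det ^ d * (B i).det ^ d := by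
    rw [hN, Matrix.det_kronecker]
    simp [Fintype.card_fin]
  have hns : Complex.normSq N.det
      = (Complex.normSq (A i).det * Complex.normSq (B i).det) ^ d := by
    rw [hkron, Complex.normSq_mul, map_pow Complex.normSq, map_pow Complex.normSq]
    ring
  rw [hd1, Complex.ofReal_re, hns] at hdet
  exact (pow_le_one_iff_of_nonneg
    (mul_nonneg (Complex.normSq_nonneg _) (Complex.normSq_nonneg _))
    (by omega)).mp hdet

lemma coeff_bound {d : ℕ} {a b : ℂ} (h : Complex.normSq a * Complex.normSq b ≤ 1) :
    (Complex.normSq a * Complex.normSq b) ^ ((1:ℝ)/d)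
      ≤ ‖a‖ ^ ((1:ℝ)/d) * ‖b‖ ^ ((1:ℝ)/d) := by
  set t := ‖a‖ * ‖b‖ with htdef
  have ht0 : 0 ≤ t := mul_nonneg (norm_nonneg _) (norm_nonneg _)
  have htt : Complex.normSq a * Complex.normSq b = t * t := by
    rw [Complex.normSq_eq_norm_sq, Complex.normSq_eq_norm_sq, htdef]
    ring
  have ht1 : t ≤ 1 := by nlinarith [htt ▸ h]
  rw [htt, Real.mul_rpow ht0 ht0,
    ← Real.mul_rpow (norm_nonneg a) (norm_nonneg b), ← htdef]
  have hle1 : t ^ ((1:ℝ)/d) ≤ 1 := Real.rpow_le_one ht0 ht1 (by positivity)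
  nlinarith [Real.rpow_nonneg ht0 ((1:ℝ)/d)]


lemma real_smul_matrix (r : ℝ) (M : Matrix (Idx d) (Idx d) ℂ) : r • M = (r : ℂ) • M := by
  ext x y
  simp [Matrix.smul_apply, Complex.real_smul]

lemma outer_zero : outer (0 : Idx d → ℂ) = 0 := by
  ext x y
  simp [outer, Matrix.vecMulVec_apply]

lemma toMat_zero : toMat (0 : Idx d → ℂ) = 0 := rfl

lemma gPure_zero (hd : 1 ≤ d) : gPure d (0 : Idx d → ℂ) = 0 := by
  have : Nonempty (Fin d) := ⟨⟨0, hd⟩⟩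
  rw [gPure_eq, toMat_zero, Matrix.det_zero]
  rw [map_zero, Real.zero_rpow (by positivity), mul_zero]

set_option maxHeartbeats 2000000 in
lemma key_step (hd : 1 ≤ d) (ρ : Matrix (Idx d) (Idx d) ℂ)
    (A B : Matrix (Fin d) (Fin d) ℂ) (pi : ℝ) (hpi : 0 < pi)
    (hp : (pi : ℂ) = ((A ⊗ₖ B) * ρ * (A ⊗ₖ B)ᴴ).trace)
    (σi : Matrix (Idx d) (Idx d) ℂ)
    (hσ : σi = (pi⁻¹ : ℝ) • ((A ⊗ₖ B) * ρ * (A ⊗ₖ B)ᴴ))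
    (M : ℕ) (q : Fin M → ℝ) (ψ : Fin M → (Idx d → ℂ))
    (hq0 : ∀ j, 0 ≤ q j) (hunit : ∀ j, ∑ x, Complex.normSq (ψ j x) = 1)
    (hdec : ρ = ∑ j, (q j : ℂ) • outer (ψ j)) :
    Gconc d σi ≤ pi⁻¹ * ((Complex.normSq A.det * Complex.normSq B.det) ^ ((1:ℝ)/d)
      * ∑ j, q j * gPure d (ψ j)) := by
  classical
  have hd0 : d ≠ 0 := by omega
  set N : Matrix (Idx d) (Idx d) ℂ := A ⊗ₖ B with hN
  set φ : Fin M → (Idx d → ℂ) := fun j => N *ᵥ ψ j with hφ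
  set nn : Fin M → ℝ := fun j => ∑ x, Complex.normSq (φ j x) with hnn
  have hnn0 : ∀ j, 0 ≤ nn j :=
    fun j => Finset.sum_nonneg fun x _ => Complex.normSq_nonneg _
  have hφ0 : ∀ j, nn j = 0 → φ j = 0 := by
    intro j h
    funext x
    have := (Finset.sum_eq_zero_iff_of_nonneg
      (fun x _ => Complex.normSq_nonneg (φ j x))).mp h x (Finset.mem_univ x)
    exact Complex.normSq_eq_zero.mp this
  have hNρ : N * ρ * Nᴴ = ∑ j, (q j : ℂ) • outer (φ j) := by
    rw [hdec, Finset.mul_sum, Finset.sum_mul]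
    apply Finset.sum_congr rfl
    intro j _
    rw [mul_smul_comm, smul_mul_assoc, ← outer_mulVec]
  have hpnn : pi = ∑ j, q j * nn j := by
    have h1 : (pi : ℂ) = ((∑ j, q j * nn j : ℝ) : ℂ) := by
      rw [hp, hNρ, Matrix.trace_sum, Complex.ofReal_sum]
      apply Finset.sum_congr rfl
      intro j _
      rw [Matrix.trace_smul, trace_outer, smul_eq_mul]
      simp only [hnn]
      push_cast
      ring
    exact_mod_cast h1
  -- the new decomposition
  set x0 : Idx d := (⟨0, hd⟩, ⟨0, hd⟩) with hx0
  set q' : Fin M → ℝ := fun j => pi⁻¹ * (q j * nn j) with hq'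
  set ψ' : Fin M → (Idx d → ℂ) := fun j =>
    if nn j = 0 then Pi.single x0 1 else ((Real.sqrt (nn j) : ℂ))⁻¹ • φ j with hψ'
  have hsmulns : ∀ j, nn j ≠ 0 →
      Complex.normSq ((Real.sqrt (nn j) : ℂ))⁻¹ = (nn j)⁻¹ := by
    intro j h
    rw [Complex.normSq_inv, Complex.normSq_ofReal, Real.mul_self_sqrt (hnn0 j)]
  have hmem : (∑ j, q' j * gPure d (ψ' j)) ∈ S d σi := by
    refine ⟨M, q', ψ', fun j => mul_nonneg (inv_nonneg.mpr hpi.le)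
      (mul_nonneg (hq0 j) (hnn0 j)), fun j => ?_, ?_, rfl⟩
    · by_cases h : nn j = 0
      · simp only [hψ', h, if_true]
        rw [Finset.sum_eq_single x0]
        · simp
        · intro b _ hb
          simp [Pi.single_eq_of_ne hb]
        · simp
      · simp only [hψ', h, if_false, Pi.smul_apply]
        have heach : ∀ x, Complex.normSq (((Real.sqrt (nn j) : ℂ))⁻¹ • φ j x)
            = (nn j)⁻¹ * Complex.normSq (φ j x) := by
          intro x
          rw [smul_eq_mul, Complex.normSq_mul, hsmulns j h]
        simp only [heach]
        rw [← Finset.mul_sum]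
        exact inv_mul_cancel₀ h
    · rw [hσ, hNρ, Finset.smul_sum]
      apply Finset.sum_congr rfl
      intro j _
      by_cases h : nn j = 0
      · have hq'0 : q' j = 0 := by simp [hq', h]
        rw [hφ0 j h, outer_zero, hq'0]
        simp
      · have houter : outer (ψ' j) = (((nn j)⁻¹ : ℝ) : ℂ) • outer (φ j) := by
          simp only [hψ', h, if_false]
          rw [outer_smul, hsmulns j h]
        rw [houter, real_smul_matrix, smul_smul, smul_smul]
        congr 1
        simp only [hq']
        push_cast
        field_simp
  have hval : (∑ j, q' j * gPure d (ψ' j))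
      = pi⁻¹ * ((Complex.normSq A.det * Complex.normSq B.det) ^ ((1:ℝ)/d)
        * ∑ j, q j * gPure d (ψ j)) := by
    rw [Finset.mul_sum, Finset.mul_sum]
    apply Finset.sum_congr rfl
    intro j _
    have hkey : nn j * gPure d (ψ' j) = gPure d (φ j) := by
      by_cases h : nn j = 0
      · rw [h, hφ0 j h, gPure_zero hd, zero_mul]
      · simp only [hψ', h, if_false]
        rw [gPure_smul hd0, hsmulns j h]
        field_simp
    have hg : gPure d (φ j)
        = (Complex.normSq A.det * Complex.normSq B.det) ^ ((1:ℝ)/d) * gPure d (ψ j) := by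
      rw [hφ]
      exact gPure_kron_mulVec hd0 A B (ψ j)
    calc q' j * gPure d (ψ' j) = pi⁻¹ * q j * (nn j * gPure d (ψ' j)) := by
          rw [hq']; ring
      _ = pi⁻¹ * q j * gPure d (φ j) := by rw [hkey]
      _ = pi⁻¹ * ((Complex.normSq A.det * Complex.normSq B.det) ^ ((1:ℝ)/d)
            * (q j * gPure d (ψ j))) := by rw [hg]; ring
  rw [Gconc_eq]
  calc sInf (S d σi) ≤ ∑ j, q' j * gPure d (ψ' j) := csInf_le (bddBelow_S d σi) hmem
    _ = _ := hval

end GAux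

set_option maxHeartbeats 1000000 in
theorem Gconc_separable_operation_bound
    (d : ℕ) (hd : 1 ≤ d)
    (ρ : Matrix (Idx d) (Idx d) ℂ) (hpsd : ρ.PosSemidef) (htr : ρ.trace = 1)
    (m : ℕ) (A B : Fin m → Matrix (Fin d) (Fin d) ℂ)
    (hTP : ∑ i, (A i ⊗ₖ B i)ᴴ * (A i ⊗ₖ B i) = 1)
    (p : Fin m → ℝ)
    (hp : ∀ i, (p i : ℂ) = ((A i ⊗ₖ B i) * ρ * (A i ⊗ₖ B i)ᴴ).trace)
    (σ : Fin m → Matrix (Idx d) (Idx d) ℂ)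
    (hσ : ∀ i, 0 < p i → σ i = ((p i)⁻¹ : ℝ) • ((A i ⊗ₖ B i) * ρ * (A i ⊗ₖ B i)ᴴ)) :
    ∑ i ∈ Finset.univ.filter (fun i => 0 < p i), p i * Gconc d (σ i)
      ≤ (∑ i, ‖(A i).det‖ ^ ((1:ℝ)/d) * ‖(B i).det‖ ^ ((1:ℝ)/d))
          * Gconc d ρ := by
  classical
  set C := ∑ i, ‖(A i).det‖ ^ ((1:ℝ)/d) * ‖(B i).det‖ ^ ((1:ℝ)/d) with hC
  have hC0 : 0 ≤ C := Finset.sum_nonneg fun i _ =>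
    mul_nonneg (Real.rpow_nonneg (norm_nonneg _) _)
      (Real.rpow_nonneg (norm_nonneg _) _)
  have key : ∀ r ∈ GAux.S d ρ,
      (∑ i ∈ Finset.univ.filter (fun i => 0 < p i), p i * Gconc d (σ i)) ≤ C * r := by
    rintro r ⟨M, q, ψ, hq0, hunit, hdec, hrval⟩
    have hR0 : 0 ≤ ∑ j, q j * gPure d (ψ j) :=
      Finset.sum_nonneg fun j _ => mul_nonneg (hq0 j) (GAux.gPure_nonneg _)
    have step1 : ∀ i ∈ Finset.univ.filter (fun i => 0 < p i),
        p i * Gconc d (σ i)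
          ≤ (Complex.normSq (A i).det * Complex.normSq (B i).det) ^ ((1:ℝ)/d)
              * ∑ j, q j * gPure d (ψ j) := by
      intro i hi
      have hpi : 0 < p i := (Finset.mem_filter.mp hi).2
      have hkey := GAux.key_step hd ρ (A i) (B i) (p i) hpi (hp i) (σ i) (hσ i hpi)
        M q ψ hq0 hunit hdec
      calc p i * Gconc d (σ i)
          ≤ p i * ((p i)⁻¹ * ((Complex.normSq (A i).det * Complex.normSq (B i).det) ^ ((1:ℝ)/d)
              * ∑ j, q j * gPure d (ψ j))) := mul_le_mul_of_nonneg_left hkey hpi.le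
        _ = (Complex.normSq (A i).det * Complex.normSq (B i).det) ^ ((1:ℝ)/d)
              * ∑ j, q j * gPure d (ψ j) := by
            field_simp
    calc (∑ i ∈ Finset.univ.filter (fun i => 0 < p i), p i * Gconc d (σ i))
        ≤ ∑ i ∈ Finset.univ.filter (fun i => 0 < p i),
            (Complex.normSq (A i).det * Complex.normSq (B i).det) ^ ((1:ℝ)/d)
              * ∑ j, q j * gPure d (ψ j) := Finset.sum_le_sum step1
      _ ≤ ∑ i, (Complex.normSq (A i).det * Complex.normSq (B i).det) ^ ((1:ℝ)/d)
              * ∑ j, q j * gPure d (ψ j) :=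
          Finset.sum_le_sum_of_subset_of_nonneg (Finset.filter_subset _ _)
            (fun i _ _ => mul_nonneg (Real.rpow_nonneg
              (mul_nonneg (Complex.normSq_nonneg _) (Complex.normSq_nonneg _)) _) hR0)
      _ ≤ ∑ i, (‖(A i).det‖ ^ ((1:ℝ)/d) * ‖(B i).det‖ ^ ((1:ℝ)/d))
              * ∑ j, q j * gPure d (ψ j) :=
          Finset.sum_le_sum fun i _ => mul_le_mul_of_nonneg_right
            (GAux.coeff_bound (GAux.normSq_det_le_one hd A B hTP i)) hR0
      _ = C * r := by rw [hrval, hC, ← Finset.sum_mul]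
  have hne := GAux.S_nonempty hpsd
  refine le_of_forall_pos_le_add fun ε hε => ?_
  have hCp : (0:ℝ) < C + 1 := by linarith
  obtain ⟨r, hrS, hrlt⟩ := Real.lt_sInf_add_pos hne (div_pos hε hCp)
  have h1 := key r hrS
  have h2 : C * r ≤ C * (Gconc d ρ + ε / (C + 1)) := by
    apply mul_le_mul_of_nonneg_left _ hC0
    rw [GAux.Gconc_eq]
    exact hrlt.le
  have h3 : C * (ε / (C + 1)) ≤ ε := by
    rw [mul_div_assoc', div_le_iff₀ hCp]
    nlinarith
  have h4 : C * (Gconc d ρ + ε / (C + 1)) = C * Gconc d ρ + C * (ε / (C + 1)) := mul_add _ _ _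
  linarith
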